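/- If a Markov operator cocycle (P,σ) is asymptotically stable (asymptotically periodic with r = 1), then (P,σ) is exact: for ℙ-a.e. ω and every f ∈ L^1_0(X,m), ‖P_ω^{(n)} f‖_{L^1} → 0 as n → ∞. Key step: for f ∈ D(X,m), necessarily λ^ω(f) = 1, since each P_ω preserves integrals and g^ω ∈ D(X,m). -/

import Mathlib

open MeasureTheory Filter Topology

/-- The cocycle `P_ω^{(n)} = P_{σ^{n-1}ω} ∘ ⋯ ∘ P_ω` generated by a family of
operators over the driving system `σ`. -/
noncomputable def coc {Ω M : Type*} [Monoid M] (P : Ω → M) (σ : Ω → Ω) : ℕ → Ω → M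
  | 0, _ => 1
  | n + 1, ω => P (σ^[n] ω) * coc P σ n ω

/-- If a Markov operator cocycle `(P,σ)` is asymptotically stable (asymptotically
periodic with `r = 1`), then `(P,σ)` is exact: for a.e. `ω` and every mean-zero
`f ∈ L¹(X,m)`, `‖P_ω^{(n)} f‖₁ → 0`. -/
theorem asymptotically_stable_implies_exact
    {X : Type*} [MeasurableSpace X] (m : Measure X) [IsProbabilityMeasure m]
    {Ω : Type*} [MeasurableSpace Ω] (Pr : Measure Ω) [IsProbabilityMeasure Pr]
    (σ : Ω → Ω) (hσ : MeasurePreserving σ Pr Pr)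
    (P : Ω → Module.End ℝ (Lp ℝ 1 m))
    (hP : ∀ᵐ ω ∂Pr, (∀ f : Lp ℝ 1 m, 0 ≤ f → 0 ≤ P ω f) ∧
      ∀ f : Lp ℝ 1 m, ∫ x, (P ω f) x ∂m = ∫ x, f x ∂m)
    (g : Ω → Lp ℝ 1 m) (lam : Ω → (Lp ℝ 1 m →L[ℝ] ℝ))
    (hdens : ∀ᵐ ω ∂Pr, 0 ≤ g ω ∧ ∫ x, (g ω) x ∂m = 1)
    (hinv : ∀ᵐ ω ∂Pr, P ω (g ω) = g (σ ω))
    (hconv : ∀ᵐ ω ∂Pr, ∀ f : Lp ℝ 1 m,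
      Tendsto (fun n => ‖coc P σ n ω (f - lam ω f • g ω)‖) atTop (𝓝 0)) :
    ∀ᵐ ω ∂Pr, ∀ f : Lp ℝ 1 m, ∫ x, f x ∂m = 0 →
      Tendsto (fun n => ‖coc P σ n ω f‖) atTop (𝓝 0) := by
  -- upgrade hP to all iterates
  have hPit : ∀ᵐ ω ∂Pr, ∀ k : ℕ, ∀ f : Lp ℝ 1 m,
      ∫ x, (P (σ^[k] ω) f) x ∂m = ∫ x, f x ∂m := by
    rw [MeasureTheory.ae_all_iff]
    intro k
    have := (hσ.iterate k).quasiMeasurePreserving.ae hP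
    filter_upwards [this] with ω hω
    exact hω.2
  filter_upwards [hPit, hdens, hconv] with ω hω hg hc
  intro f hf
  -- integral is preserved along the cocycle
  have hint : ∀ (h : Lp ℝ 1 m) (n : ℕ), ∫ x, (coc P σ n ω h) x ∂m = ∫ x, h x ∂m := by
    intro h n
    induction n with
    | zero => simp [coc]
    | succ n ih =>
      have : coc P σ (n+1) ω h = P (σ^[n] ω) (coc P σ n ω h) := rfl
      rw [this, hω n, ih]
  -- λ ω f = 0
  have hlam : lam ω f = 0 := by
    set h := f - lam ω f • g ω with hh
    have hinth : ∫ x, h x ∂m = - lam ω f := by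
      have h1 : (h : X → ℝ) =ᵐ[m] fun x => f x - lam ω f * (g ω) x := by
        filter_upwards [Lp.coeFn_sub f (lam ω f • g ω), Lp.coeFn_smul (lam ω f) (g ω)]
          with x h1 h2
        rw [hh, h1, Pi.sub_apply, h2, Pi.smul_apply, smul_eq_mul]
      rw [integral_congr_ae h1, integral_sub (L1.integrable_coeFn f)
        (((L1.integrable_coeFn (g ω))).const_mul _), integral_const_mul, hf, hg.2]
      ring
    have hle : ∀ n : ℕ, |lam ω f| ≤ ‖coc P σ n ω h‖ := by
      intro n
      have := hint h n
      rw [hinth] at this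
      calc |lam ω f| = |∫ x, (coc P σ n ω h) x ∂m| := by rw [this]; rw [abs_neg]
        _ ≤ ∫ x, |(coc P σ n ω h) x| ∂m := by
            simpa using norm_integral_le_integral_norm (fun x => (coc P σ n ω h) x)
        _ = ‖coc P σ n ω h‖ := by
            rw [L1.norm_eq_integral_norm]; simp [Real.norm_eq_abs]
    have := le_of_tendsto_of_tendsto' tendsto_const_nhds (hc f) hle
    simpa using abs_nonpos_iff.mp this
  have : f - lam ω f • g ω = f := by rw [hlam]; simp
  simpa [this] using hc f
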